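/- Let p > 3 be a prime and let m, x be rational numbers whose denominators are not divisible by p, with m·x ≢ 0 (mod p). Then Σ_{k=0}^{p-1} W_k(x+m)/m^k ≡ W_{p-1}(x) (mod p) and W_{p-1}(x) ≡ Σ_{k=0}^{p-1} C(2k,k)·C(3k,k)/(-x)^{3k} (mod p). -/

import Mathlib

/-- `Wgen n x = Σ_{k=0}^{⌊n/3⌋} C(2k,k)·C(3k,k)·C(n,3k)·x^{n-3k}`. -/
def Wgen (n : ℕ) (x : ℚ) : ℚ :=
  ∑ k ∈ Finset.range (n / 3 + 1),
    (Nat.choose (2 * k) k : ℚ) * (Nat.choose (3 * k) k : ℚ) *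
      (Nat.choose n (3 * k) : ℚ) * x ^ (n - 3 * k)

/-- A rational number is `p`-integral if `p` does not divide its denominator
(in lowest terms). -/
def pIntegral (p : ℕ) (a : ℚ) : Prop := ¬ (p : ℕ) ∣ a.den

/-- For `p`-integral rationals `a, b`, `a ≡ b (mod p)` means that `p` divides
the numerator of `a - b` in lowest terms. -/
def ratCongr (p : ℕ) (a b : ℚ) : Prop := (p : ℤ) ∣ (a - b).num

section Aux

variable {p : ℕ} [hpf : Fact p.Prime]

/-- `a` is p-integral and casts to `z` in `ZMod p`. -/
def Good (p : ℕ) [Fact p.Prime] (a : ℚ) (z : ZMod p) : Prop :=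
  ((a.den : ZMod p) ≠ 0) ∧ ((a : ℚ) : ZMod p) = z

lemma den_ne_aux {a b c : ℚ} (hd : c.den ∣ a.den * b.den)
    (ha : ((a.den : ZMod p)) ≠ 0) (hb : ((b.den : ZMod p)) ≠ 0) :
    ((c.den : ZMod p)) ≠ 0 := by
  intro h
  rw [ZMod.natCast_eq_zero_iff] at h
  rcases (Nat.Prime.dvd_mul hpf.out).1 (h.trans hd) with h' | h'
  · exact ha ((ZMod.natCast_eq_zero_iff _ _).2 h')
  · exact hb ((ZMod.natCast_eq_zero_iff _ _).2 h')

lemma Good.add {a b : ℚ} {za zb : ZMod p} (ha : Good p a za) (hb : Good p b zb) :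
    Good p (a + b) (za + zb) :=
  ⟨den_ne_aux (Rat.add_den_dvd a b) ha.1 hb.1,
    by rw [Rat.cast_add_of_ne_zero ha.1 hb.1, ha.2, hb.2]⟩

lemma Good.mul {a b : ℚ} {za zb : ZMod p} (ha : Good p a za) (hb : Good p b zb) :
    Good p (a * b) (za * zb) :=
  ⟨den_ne_aux (Rat.mul_den_dvd a b) ha.1 hb.1,
    by rw [Rat.cast_mul_of_ne_zero ha.1 hb.1, ha.2, hb.2]⟩

lemma Good.natCast (n : ℕ) : Good p (n : ℚ) (n : ZMod p) := by
  constructor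
  · rw [Rat.den_natCast]
    simp
  · push_cast; ring

lemma Good.one : Good p 1 1 := by simpa using Good.natCast (p := p) 1

lemma Good.zero : Good p 0 0 := by simpa using Good.natCast (p := p) 0

lemma Good.neg {a : ℚ} {za : ZMod p} (ha : Good p a za) : Good p (-a) (-za) := by
  refine ⟨?_, by rw [Rat.cast_neg, ha.2]⟩
  rw [Rat.neg_den]; exact ha.1

lemma Good.sub {a b : ℚ} {za zb : ZMod p} (ha : Good p a za) (hb : Good p b zb) :
    Good p (a - b) (za - zb) := by
  simpa [sub_eq_add_neg] using ha.add hb.neg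

lemma Good.pow {a : ℚ} {za : ZMod p} (ha : Good p a za) (n : ℕ) :
    Good p (a ^ n) (za ^ n) := by
  induction n with
  | zero => simpa using Good.one
  | succ n ih => rw [pow_succ, pow_succ]; exact ih.mul ha

lemma Good.sum {s : Finset ℕ} {f : ℕ → ℚ} {g : ℕ → ZMod p}
    (h : ∀ i ∈ s, Good p (f i) (g i)) :
    Good p (∑ i ∈ s, f i) (∑ i ∈ s, g i) := by
  classical
  induction s using Finset.induction_on with
  | empty => simpa using Good.zero
  | insert _ _ hns ih =>
      rename_i a s
      rw [Finset.sum_insert hns, Finset.sum_insert hns]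
      exact (h a (Finset.mem_insert_self a s)).add
        (ih fun i hi => h i (Finset.mem_insert_of_mem hi))

lemma Good.num_ne {a : ℚ} {za : ZMod p} (ha : Good p a za) (hz : za ≠ 0) :
    ((a.num : ZMod p)) ≠ 0 := by
  intro h
  apply hz
  rw [← ha.2, Rat.cast_def, h, zero_div]

lemma Good.inv {a : ℚ} {za : ZMod p} (ha : Good p a za) (hz : za ≠ 0) :
    Good p a⁻¹ za⁻¹ := by
  have hnum := ha.num_ne hz
  refine ⟨?_, by rw [Rat.cast_inv_of_ne_zero hnum, ha.2]⟩
  intro h0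
  rw [ZMod.natCast_eq_zero_iff] at h0
  apply hnum
  have hd : ((a⁻¹).den : ℤ) ∣ a.num := by
    rw [Rat.inv_def]; exact Rat.den_dvd _ _
  rw [ZMod.intCast_zmod_eq_zero_iff_dvd]
  exact dvd_trans (Int.natCast_dvd_natCast.2 h0) hd

lemma Good.div {a b : ℚ} {za zb : ZMod p} (ha : Good p a za) (hb : Good p b zb)
    (hz : zb ≠ 0) : Good p (a / b) (za / zb) := by
  rw [div_eq_mul_inv, div_eq_mul_inv]
  exact ha.mul (hb.inv hz)

lemma ratCongr_of_good {a b : ℚ} {z : ZMod p} (ha : Good p a z) (hb : Good p b z) :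
    (p : ℤ) ∣ (a - b).num := by
  have hs := ha.sub hb
  rw [sub_self] at hs
  have h0 : (((a - b : ℚ)) : ZMod p) = 0 := hs.2
  rw [Rat.cast_def, div_eq_zero_iff] at h0
  rcases h0 with h0 | h0
  · exact (ZMod.intCast_zmod_eq_zero_iff_dvd _ _).1 h0
  · exact absurd h0 hs.1

lemma cast_choose_sub_one {k : ℕ} (hk : k ≤ p - 1) :
    (((p - 1).choose k : ℕ) : ZMod p) = (-1 : ZMod p) ^ k := by
  induction k with
  | zero => simp
  | succ k ih =>
    have hp0 : 0 < p := hpf.out.pos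
    have hpas : (p - 1).choose k + (p - 1).choose (k + 1) = p.choose (k + 1) := by
      have h := Nat.choose_succ_succ (p - 1) k
      rw [show (p - 1).succ = p by omega] at h
      exact h.symm
    have hdvd : p ∣ p.choose (k + 1) :=
      hpf.out.dvd_choose_self (Nat.succ_ne_zero k) (by omega)
    have h0 : ((p.choose (k + 1) : ℕ) : ZMod p) = 0 :=
      (ZMod.natCast_eq_zero_iff _ _).2 hdvd
    rw [← hpas] at h0
    push_cast at h0
    have hih := ih (by omega)
    rw [pow_succ]
    have h1 : (((p - 1).choose (k + 1) : ℕ) : ZMod p) = -(((p - 1).choose k : ℕ) : ZMod p) := by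
      linear_combination h0
    rw [h1, hih]; ring

lemma acf_eq_zero {k : ℕ} (hk : p ≤ 3 * k) (hk' : k < p) :
    ((Nat.choose (2 * k) k : ℕ) : ZMod p) * ((Nat.choose (3 * k) k : ℕ) : ZMod p) = 0 := by
  rcases le_or_gt p (2 * k) with h | h
  · have hd : p ∣ Nat.choose (2 * k) k := hpf.out.dvd_choose hk' (by omega) h
    rw [(ZMod.natCast_eq_zero_iff _ _).2 hd, zero_mul]
  · have hd : p ∣ Nat.choose (3 * k) k := hpf.out.dvd_choose hk' (by omega) hk
    rw [(ZMod.natCast_eq_zero_iff _ _).2 hd, mul_zero]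

lemma fkey (u : ZMod p) : ∀ {r : ℕ}, r ≤ p - 1 →
    (∑ t ∈ Finset.range (p - r), (((t + r).choose r : ℕ) : ZMod p) * u ^ t) * (1 - u) ^ (r + 1)
      = (1 - u) ^ p := by
  intro r
  induction r with
  | zero =>
    intro _
    have h1 : (∑ t ∈ Finset.range (p - 0), (((t + 0).choose 0 : ℕ) : ZMod p) * u ^ t)
        = ∑ t ∈ Finset.range p, u ^ t := by simp
    rw [h1, pow_one]
    have h2 := geom_sum_mul u p
    have h3 : (1 - u) ^ p = 1 - u ^ p := by
      rw [ZMod.pow_card, ZMod.pow_card]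
    rw [h3]
    linear_combination -h2
  | succ r ih =>
    intro hr
    have hr' : r ≤ p - 1 := by omega
    have hN : p - r = (p - (r + 1)) + 1 := by
      have := hpf.out.two_le; omega
    set N := p - (r + 1) with hNdef
    have hstep : (∑ t ∈ Finset.range (p - r), (((t + r).choose r : ℕ) : ZMod p) * u ^ t)
        = (1 - u) * ∑ t ∈ Finset.range N, (((t + (r + 1)).choose (r + 1) : ℕ) : ZMod p) * u ^ t := by
      have hpas : ∀ t : ℕ, (((t + r).choose r : ℕ) : ZMod p)
          = (((t + r + 1).choose (r + 1) : ℕ) : ZMod p) - (((t + r).choose (r + 1) : ℕ) : ZMod p) := by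
        intro t
        have h := Nat.choose_succ_succ (t + r) r
        have h' : (((t + r + 1).choose (r + 1) : ℕ) : ZMod p)
            = ((t + r).choose r : ℕ) + (((t + r).choose (r + 1) : ℕ) : ZMod p) := by
          exact_mod_cast congrArg (Nat.cast : ℕ → ZMod p) h
        linear_combination -h'
      rw [hN]
      rw [Finset.sum_congr rfl (fun t _ => by rw [hpas t, sub_mul])]
      rw [Finset.sum_sub_distrib]
      have hS1 : ∑ t ∈ Finset.range (N + 1), (((t + r + 1).choose (r + 1) : ℕ) : ZMod p) * u ^ t
          = ∑ t ∈ Finset.range N, (((t + (r + 1)).choose (r + 1) : ℕ) : ZMod p) * u ^ t := by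
        rw [Finset.sum_range_succ]
        have hNp : N + r + 1 = p := by omega
        have : ((((N + r + 1).choose (r + 1) : ℕ)) : ZMod p) = 0 := by
          rw [ZMod.natCast_eq_zero_iff]
          rw [hNp]
          exact hpf.out.dvd_choose_self (Nat.succ_ne_zero r) (by omega)
        rw [this, zero_mul, add_zero]
        exact Finset.sum_congr rfl (fun t _ => by ring_nf)
      have hS2 : ∑ t ∈ Finset.range (N + 1), (((t + r).choose (r + 1) : ℕ) : ZMod p) * u ^ t
          = u * ∑ t ∈ Finset.range N, (((t + (r + 1)).choose (r + 1) : ℕ) : ZMod p) * u ^ t := by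
        rw [Finset.sum_range_succ']
        have h0 : (((0 + r).choose (r + 1) : ℕ) : ZMod p) * u ^ 0 = 0 := by
          rw [Nat.choose_eq_zero_of_lt (by omega)]
          simp
        rw [h0, add_zero, Finset.mul_sum]
        refine Finset.sum_congr rfl (fun t _ => ?_)
        have : t + 1 + r = t + (r + 1) := by omega
        rw [this, pow_succ]
        ring
      rw [hS1, hS2]
      ring
    calc (∑ t ∈ Finset.range (p - (r + 1)), (((t + (r + 1)).choose (r + 1) : ℕ) : ZMod p) * u ^ t)
          * (1 - u) ^ (r + 1 + 1)
        = ((1 - u) * ∑ t ∈ Finset.range N, (((t + (r + 1)).choose (r + 1) : ℕ) : ZMod p) * u ^ t)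
          * (1 - u) ^ (r + 1) := by rw [← hNdef]; ring
      _ = (∑ t ∈ Finset.range (p - r), (((t + r).choose r : ℕ) : ZMod p) * u ^ t) * (1 - u) ^ (r + 1) := by
          rw [hstep]
      _ = (1 - u) ^ p := ih hr'

lemma innerSumW (M X : ZMod p) (hM : M ≠ 0) (hX : X ≠ 0) {r : ℕ} (hr : r ≤ p - 1) :
    ∑ k ∈ Finset.range p, ((Nat.choose k r : ℕ) : ZMod p) * (X + M) ^ (k - r) / M ^ k
      = ((-X) ^ r)⁻¹ := by
  have hp0 : 0 < p := hpf.out.pos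
  have hrp : r ≤ p := by omega
  set Y := X + M with hY
  set u := Y * M⁻¹ with hu
  rw [Finset.range_eq_Ico, ← Finset.sum_Ico_consecutive _ (Nat.zero_le r) hrp]
  have hz : ∑ k ∈ Finset.Ico 0 r, ((Nat.choose k r : ℕ) : ZMod p) * Y ^ (k - r) / M ^ k = 0 := by
    refine Finset.sum_eq_zero fun k hk => ?_
    rw [Finset.mem_Ico] at hk
    rw [Nat.choose_eq_zero_of_lt hk.2]
    simp
  rw [hz, zero_add, Finset.sum_Ico_eq_sum_range]
  have hterm : ∀ t : ℕ, ((Nat.choose (r + t) r : ℕ) : ZMod p) * Y ^ ((r + t) - r) / M ^ (r + t)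
      = (((t + r).choose r : ℕ) : ZMod p) * u ^ t * (M ^ r)⁻¹ := by
    intro t
    rw [Nat.add_comm r t, Nat.add_sub_cancel, div_eq_mul_inv, pow_add, mul_inv]
    rw [hu, mul_pow, inv_pow]
    ring
  rw [Finset.sum_congr rfl fun t _ => hterm t, ← Finset.sum_mul]
  have hv : (1 - u) = -X * M⁻¹ := by
    rw [hu, hY]
    field_simp
    ring
  have hvne : (1 - u) ≠ 0 := by
    rw [hv]; exact mul_ne_zero (neg_ne_zero.2 hX) (inv_ne_zero hM)
  have hf := fkey u hr
  have hsplit : (1 - u) ^ p = (1 - u) ^ (p - 1 - r) * (1 - u) ^ (r + 1) := by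
    rw [← pow_add]; congr 1; omega
  have hfeq : (∑ t ∈ Finset.range (p - r), (((t + r).choose r : ℕ) : ZMod p) * u ^ t)
      = (1 - u) ^ (p - 1 - r) :=
    mul_right_cancel₀ (pow_ne_zero _ hvne) (hf.trans hsplit)
  rw [hfeq]
  have hvp : (1 - u) ^ (p - 1 - r) * (1 - u) ^ r = 1 := by
    rw [← pow_add, show p - 1 - r + r = p - 1 by omega]
    exact ZMod.pow_card_sub_one_eq_one hvne
  have hinv : (1 - u) ^ (p - 1 - r) = ((1 - u) ^ r)⁻¹ :=
    eq_inv_of_mul_eq_one_left hvp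
  rw [hinv, hv, mul_pow, inv_pow, mul_inv, inv_inv, mul_assoc, mul_inv_cancel₀ (pow_ne_zero _ hM),
    mul_one]

lemma sum_ext (hp3 : 3 < p) (g : ℕ → ZMod p) :
    ∑ j ∈ Finset.range ((p - 1) / 3 + 1),
        ((Nat.choose (2 * j) j : ℕ) : ZMod p) * ((Nat.choose (3 * j) j : ℕ) : ZMod p) / g j
      = ∑ k ∈ Finset.range p,
        ((Nat.choose (2 * k) k : ℕ) : ZMod p) * ((Nat.choose (3 * k) k : ℕ) : ZMod p) / g k := by
  refine Finset.sum_subset (Finset.range_subset_range.2 (by omega)) fun k hk hk' => ?_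
  rw [Finset.mem_range] at hk hk'
  rw [acf_eq_zero (by omega) hk, zero_div]

lemma ZB (hp3 : 3 < p) (X : ZMod p) (hX : X ≠ 0) :
    ∑ j ∈ Finset.range ((p - 1) / 3 + 1),
        ((Nat.choose (2 * j) j : ℕ) : ZMod p) * ((Nat.choose (3 * j) j : ℕ) : ZMod p) *
          ((Nat.choose (p - 1) (3 * j) : ℕ) : ZMod p) * X ^ ((p - 1) - 3 * j)
      = ∑ j ∈ Finset.range ((p - 1) / 3 + 1),
        ((Nat.choose (2 * j) j : ℕ) : ZMod p) * ((Nat.choose (3 * j) j : ℕ) : ZMod p)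
          / (-X) ^ (3 * j) := by
  refine Finset.sum_congr rfl fun j hj => ?_
  rw [Finset.mem_range] at hj
  have h3j : 3 * j ≤ p - 1 := by omega
  rw [cast_choose_sub_one h3j]
  have hXp : X ^ (p - 1 - 3 * j) = (X ^ (3 * j))⁻¹ := by
    refine eq_inv_of_mul_eq_one_left ?_
    rw [← pow_add, show p - 1 - 3 * j + 3 * j = p - 1 by omega]
    exact ZMod.pow_card_sub_one_eq_one hX
  have hneg : ((-1 : ZMod p) ^ (3 * j))⁻¹ = (-1 : ZMod p) ^ (3 * j) := by
    rw [← inv_pow, inv_neg, inv_one]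
  rw [hXp, div_eq_mul_inv, neg_pow X, mul_inv, hneg]
  ring

lemma Zmain (hp3 : 3 < p) (M X : ZMod p) (hM : M ≠ 0) (hX : X ≠ 0) :
    ∑ k ∈ Finset.range p,
        (∑ j ∈ Finset.range (k / 3 + 1),
          ((Nat.choose (2 * j) j : ℕ) : ZMod p) * ((Nat.choose (3 * j) j : ℕ) : ZMod p) *
            ((Nat.choose k (3 * j) : ℕ) : ZMod p) * (X + M) ^ (k - 3 * j)) / M ^ k
      = ∑ j ∈ Finset.range ((p - 1) / 3 + 1),
        ((Nat.choose (2 * j) j : ℕ) : ZMod p) * ((Nat.choose (3 * j) j : ℕ) : ZMod p)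
          / (-X) ^ (3 * j) := by
  have hstep1 : ∀ k ∈ Finset.range p,
      (∑ j ∈ Finset.range (k / 3 + 1),
          ((Nat.choose (2 * j) j : ℕ) : ZMod p) * ((Nat.choose (3 * j) j : ℕ) : ZMod p) *
            ((Nat.choose k (3 * j) : ℕ) : ZMod p) * (X + M) ^ (k - 3 * j))
        = ∑ j ∈ Finset.range ((p - 1) / 3 + 1),
          ((Nat.choose (2 * j) j : ℕ) : ZMod p) * ((Nat.choose (3 * j) j : ℕ) : ZMod p) *
            ((Nat.choose k (3 * j) : ℕ) : ZMod p) * (X + M) ^ (k - 3 * j) := by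
    intro k hk
    rw [Finset.mem_range] at hk
    refine Finset.sum_subset (Finset.range_subset_range.2 (by omega)) fun j hj hj' => ?_
    rw [Finset.mem_range] at hj hj'
    rw [Nat.choose_eq_zero_of_lt (show k < 3 * j by omega)]
    simp
  have hs : ∑ k ∈ Finset.range p,
      (∑ j ∈ Finset.range (k / 3 + 1),
        ((Nat.choose (2 * j) j : ℕ) : ZMod p) * ((Nat.choose (3 * j) j : ℕ) : ZMod p) *
          ((Nat.choose k (3 * j) : ℕ) : ZMod p) * (X + M) ^ (k - 3 * j)) / M ^ k
      = ∑ k ∈ Finset.range p,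
      (∑ j ∈ Finset.range ((p - 1) / 3 + 1),
        ((Nat.choose (2 * j) j : ℕ) : ZMod p) * ((Nat.choose (3 * j) j : ℕ) : ZMod p) *
          ((Nat.choose k (3 * j) : ℕ) : ZMod p) * (X + M) ^ (k - 3 * j)) / M ^ k :=
    Finset.sum_congr rfl fun k hk => by rw [hstep1 k hk]
  rw [hs]
  simp only [Finset.sum_div]
  rw [Finset.sum_comm]
  refine Finset.sum_congr rfl fun j hj => ?_
  rw [Finset.mem_range] at hj
  have hr : 3 * j ≤ p - 1 := by omega
  have hre : ∀ k ∈ Finset.range p,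
      ((Nat.choose (2 * j) j : ℕ) : ZMod p) * ((Nat.choose (3 * j) j : ℕ) : ZMod p) *
          ((Nat.choose k (3 * j) : ℕ) : ZMod p) * (X + M) ^ (k - 3 * j) / M ^ k
        = ((Nat.choose (2 * j) j : ℕ) : ZMod p) * ((Nat.choose (3 * j) j : ℕ) : ZMod p) *
          (((Nat.choose k (3 * j) : ℕ) : ZMod p) * (X + M) ^ (k - 3 * j) / M ^ k) := by
    intro k _
    ring
  rw [Finset.sum_congr rfl hre, ← Finset.mul_sum, innerSumW M X hM hX hr, div_eq_mul_inv]

end Aux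

theorem sum_Wgen_congr (p : ℕ) (hp : p.Prime) (hp3 : 3 < p) (m x : ℚ)
    (hm : pIntegral p m) (hx : pIntegral p x)
    (hmx : ¬ ratCongr p (m * x) 0) :
    ratCongr p (∑ k ∈ Finset.range p, Wgen k (x + m) / m ^ k) (Wgen (p - 1) x) ∧
    ratCongr p (Wgen (p - 1) x)
      (∑ k ∈ Finset.range p,
        (Nat.choose (2 * k) k : ℚ) * (Nat.choose (3 * k) k : ℚ) / (-x) ^ (3 * k)) := by
  haveI : Fact p.Prime := ⟨hp⟩
  have hgm : Good p m ((m : ℚ) : ZMod p) :=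
    ⟨fun h0 => hm ((ZMod.natCast_eq_zero_iff _ _).1 h0), rfl⟩
  have hgx : Good p x ((x : ℚ) : ZMod p) :=
    ⟨fun h0 => hx ((ZMod.natCast_eq_zero_iff _ _).1 h0), rfl⟩
  set M : ZMod p := ((m : ℚ) : ZMod p) with hMdef
  set X : ZMod p := ((x : ℚ) : ZMod p) with hXdef
  have hMX : M * X ≠ 0 := by
    intro h
    apply hmx
    have hg : Good p (m * x) 0 := by rw [← h]; exact hgm.mul hgx
    exact ratCongr_of_good hg Good.zero
  have hM : M ≠ 0 := fun h => hMX (by rw [h, zero_mul])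
  have hX : X ≠ 0 := fun h => hMX (by rw [h, mul_zero])
  -- Good facts for the three big rational expressions
  have gW : ∀ (n : ℕ) (y : ℚ) (Y : ZMod p), Good p y Y → Good p (Wgen n y)
      (∑ j ∈ Finset.range (n / 3 + 1),
        ((Nat.choose (2 * j) j : ℕ) : ZMod p) * ((Nat.choose (3 * j) j : ℕ) : ZMod p) *
          ((Nat.choose n (3 * j) : ℕ) : ZMod p) * Y ^ (n - 3 * j)) := by
    intro n y Y hy
    exact Good.sum fun j _ =>
      (((Good.natCast _).mul (Good.natCast _)).mul (Good.natCast _)).mul (hy.pow _)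
  have g1 : Good p (∑ k ∈ Finset.range p, Wgen k (x + m) / m ^ k)
      (∑ k ∈ Finset.range p,
        (∑ j ∈ Finset.range (k / 3 + 1),
          ((Nat.choose (2 * j) j : ℕ) : ZMod p) * ((Nat.choose (3 * j) j : ℕ) : ZMod p) *
            ((Nat.choose k (3 * j) : ℕ) : ZMod p) * (X + M) ^ (k - 3 * j)) / M ^ k) :=
    Good.sum fun k _ =>
      (gW k (x + m) (X + M) (hgx.add hgm)).div (hgm.pow k) (pow_ne_zero _ hM)
  have g2 : Good p (Wgen (p - 1) x)
      (∑ j ∈ Finset.range ((p - 1) / 3 + 1),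
        ((Nat.choose (2 * j) j : ℕ) : ZMod p) * ((Nat.choose (3 * j) j : ℕ) : ZMod p) *
          ((Nat.choose (p - 1) (3 * j) : ℕ) : ZMod p) * X ^ ((p - 1) - 3 * j)) :=
    gW (p - 1) x X hgx
  have g3 : Good p
      (∑ k ∈ Finset.range p,
        (Nat.choose (2 * k) k : ℚ) * (Nat.choose (3 * k) k : ℚ) / (-x) ^ (3 * k))
      (∑ k ∈ Finset.range p,
        ((Nat.choose (2 * k) k : ℕ) : ZMod p) * ((Nat.choose (3 * k) k : ℕ) : ZMod p)
          / (-X) ^ (3 * k)) :=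
    Good.sum fun k _ =>
      ((Good.natCast _).mul (Good.natCast _)).div (hgx.neg.pow _)
        (pow_ne_zero _ (neg_ne_zero.2 hX))
  have hZ1 := Zmain hp3 M X hM hX
  have hZB := ZB hp3 X hX
  have hExt := sum_ext hp3 (fun k => (-X) ^ (3 * k))
  constructor
  · have g1' : Good p (∑ k ∈ Finset.range p, Wgen k (x + m) / m ^ k)
        (∑ j ∈ Finset.range ((p - 1) / 3 + 1),
          ((Nat.choose (2 * j) j : ℕ) : ZMod p) * ((Nat.choose (3 * j) j : ℕ) : ZMod p) *
            ((Nat.choose (p - 1) (3 * j) : ℕ) : ZMod p) * X ^ ((p - 1) - 3 * j)) := by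
      rw [hZB]; rw [← hZ1]; exact g1
    exact ratCongr_of_good g1' g2
  · have g2' : Good p (Wgen (p - 1) x)
        (∑ k ∈ Finset.range p,
          ((Nat.choose (2 * k) k : ℕ) : ZMod p) * ((Nat.choose (3 * k) k : ℕ) : ZMod p)
            / (-X) ^ (3 * k)) := by
      rw [← hExt, ← hZB]; exact g2
    exact ratCongr_of_good g2' g3
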